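/- Distance comparison for the reflection map on epigraphs: let n ≥ 2, let f : ℝ^{n−1} → ℝ be Lipschitz with Lipschitz constant M, let D = {(x', x_n) : x_n > f(x')} be the epigraph supported by f, and for λ > 0 define Φ_λ^{-1}(x) = (x', f(x') + (1/λ)(f(x') − x_n)) for x = (x', x_n) ∈ D. Then there exists a constant C > 0, depending only on λ and M, such that |x − y| ≤ C |Φ_λ^{-1}(x) − y| for all x, y ∈ D. -/

import Mathlib

open MeasureTheory ENNReal

noncomputable section

/-- The `p`-th power of the Gagliardo `W^{s,p}` seminorm of `u` over `Ω`. -/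
def gagliardoPow {n : ℕ} (s p : ℝ) (Ω : Set (EuclideanSpace ℝ (Fin n)))
    (u : EuclideanSpace ℝ (Fin n) → EuclideanSpace ℝ (Fin n)) : ℝ≥0∞ :=
  ∫⁻ x in Ω, ∫⁻ y in Ω,
    ENNReal.ofReal (‖u x - u y‖ ^ p / ‖x - y‖ ^ ((n : ℝ) + s * p))

/-- The `p`-th power of the projected seminorm `[u]_{X^{s,p}(Ω)}`. -/
def projPow {n : ℕ} (s p : ℝ) (Ω : Set (EuclideanSpace ℝ (Fin n)))
    (u : EuclideanSpace ℝ (Fin n) → EuclideanSpace ℝ (Fin n)) : ℝ≥0∞ :=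
  ∫⁻ x in Ω, ∫⁻ y in Ω,
    ENNReal.ofReal (|(inner ℝ (u x - u y) (x - y) : ℝ)| ^ p / ‖x - y‖ ^ ((n : ℝ) + s * p + p))

/-- The `p`-th power of the `L^p(Ω)` norm. -/
def lpPow {n : ℕ} (p : ℝ) (Ω : Set (EuclideanSpace ℝ (Fin n)))
    (u : EuclideanSpace ℝ (Fin n) → EuclideanSpace ℝ (Fin n)) : ℝ≥0∞ :=
  ∫⁻ x in Ω, ENNReal.ofReal (‖u x‖ ^ p)

/-- `u ∈ W^{s,p}(Ω; ℝⁿ)`. -/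
def MemWsp {n : ℕ} (s p : ℝ) (Ω : Set (EuclideanSpace ℝ (Fin n)))
    (u : EuclideanSpace ℝ (Fin n) → EuclideanSpace ℝ (Fin n)) : Prop :=
  AEStronglyMeasurable u (volume.restrict Ω) ∧ lpPow p Ω u < ⊤ ∧ gagliardoPow s p Ω u < ⊤

/-- Infinitesimal rigid motions: `r x = A x + b` with `A` skew-symmetric. -/
def IsRigid {n : ℕ} (r : EuclideanSpace ℝ (Fin n) → EuclideanSpace ℝ (Fin n)) : Prop :=
  ∃ (A : Matrix (Fin n) (Fin n) ℝ) (b : EuclideanSpace ℝ (Fin n)),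
    A.transpose = -A ∧ ∀ x i, r x i = (∑ j, A i j * x j) + b i

/-- First `d` coordinates of a point of `ℝ^{d+1}`. -/
def fst' {d : ℕ} (x : EuclideanSpace ℝ (Fin (d+1))) : EuclideanSpace ℝ (Fin d) :=
  WithLp.toLp 2 (fun i => x i.castSucc)

/-- Last coordinate of a point of `ℝ^{d+1}`. -/
def lastc {d : ℕ} (x : EuclideanSpace ℝ (Fin (d+1))) : ℝ := x (Fin.last d)

/-- Assemble a point of `ℝ^{d+1}` from `x' ∈ ℝ^d` and a last coordinate `t`. -/
def mkPt {d : ℕ} (x' : EuclideanSpace ℝ (Fin d)) (t : ℝ) : EuclideanSpace ℝ (Fin (d+1)) :=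
  WithLp.toLp 2 (fun i => if h : (i : ℕ) < d then x' ⟨i, h⟩ else t)

/-- The open epigraph of `f : ℝ^d → ℝ`. -/
def epigraph {d : ℕ} (f : EuclideanSpace ℝ (Fin d) → ℝ) : Set (EuclideanSpace ℝ (Fin (d+1))) :=
  {x | f (fst' x) < lastc x}

/-- `Ω` is a Lipschitz domain with Lipschitz constant `≤ L`. -/
def IsLipschitzDomainLE {d : ℕ} (L : ℝ) (Ω : Set (EuclideanSpace ℝ (Fin (d+1)))) : Prop :=
  ∃ (m : ℕ) (c : Fin m → EuclideanSpace ℝ (Fin (d+1))) (ρ : Fin m → ℝ),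
    frontier Ω ⊆ ⋃ i, Metric.ball (c i) (ρ i) ∧
    ∀ i : Fin m, ∃ (T : EuclideanSpace ℝ (Fin (d+1)) ≃ᵢ EuclideanSpace ℝ (Fin (d+1)))
      (f : EuclideanSpace ℝ (Fin d) → ℝ),
      LipschitzWith L.toNNReal f ∧
      (∀ x ∈ frontier Ω ∩ Metric.ball (c i) (ρ i), lastc (T x) = f (fst' (T x))) ∧
      (∀ x ∈ Ω ∩ Metric.ball (c i) (ρ i), T x ∈ epigraph f)

/-- `u ∈ C¹_c(cl D; ℝⁿ)`. -/
def MemC1cCl {n : ℕ} (D : Set (EuclideanSpace ℝ (Fin n)))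
    (u : EuclideanSpace ℝ (Fin n) → EuclideanSpace ℝ (Fin n)) : Prop :=
  ContDiffOn ℝ 1 u (closure D) ∧ HasCompactSupport u ∧ tsupport u ⊆ closure D


lemma fst'_mkPt {d : ℕ} (a : EuclideanSpace ℝ (Fin d)) (t : ℝ) : fst' (mkPt a t) = a := by
  ext i
  simp [fst', mkPt]

lemma lastc_mkPt {d : ℕ} (a : EuclideanSpace ℝ (Fin d)) (t : ℝ) : lastc (mkPt a t) = t := by
  simp only [lastc, mkPt, PiLp.toLp_apply]
  rw [dif_neg (by simp)]

lemma fst'_sub {d : ℕ} (x y : EuclideanSpace ℝ (Fin (d+1))) :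
    fst' (x - y) = fst' x - fst' y := by ext i; simp [fst']

lemma lastc_sub {d : ℕ} (x y : EuclideanSpace ℝ (Fin (d+1))) :
    lastc (x - y) = lastc x - lastc y := rfl

lemma norm_sq_split {d : ℕ} (v : EuclideanSpace ℝ (Fin (d+1))) :
    ‖v‖^2 = ‖fst' v‖^2 + (lastc v)^2 := by
  rw [EuclideanSpace.norm_eq, EuclideanSpace.norm_eq,
    Real.sq_sqrt (by positivity), Real.sq_sqrt (by positivity),
    Fin.sum_univ_castSucc]
  simp [fst', lastc, sq_abs]

lemma abs_lastc_le {d : ℕ} (v : EuclideanSpace ℝ (Fin (d+1))) : |lastc v| ≤ ‖v‖ := by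
  have h1 : (lastc v)^2 ≤ ‖v‖^2 := by nlinarith [norm_sq_split v, sq_nonneg ‖fst' v‖]
  calc |lastc v| = Real.sqrt ((lastc v)^2) := (Real.sqrt_sq_eq_abs _).symm
    _ ≤ Real.sqrt (‖v‖^2) := Real.sqrt_le_sqrt h1
    _ = ‖v‖ := Real.sqrt_sq (norm_nonneg v)

lemma norm_fst'_le {d : ℕ} (v : EuclideanSpace ℝ (Fin (d+1))) : ‖fst' v‖ ≤ ‖v‖ := by
  have h1 : ‖fst' v‖^2 ≤ ‖v‖^2 := by nlinarith [norm_sq_split v, sq_nonneg (lastc v)]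
  calc ‖fst' v‖ = Real.sqrt (‖fst' v‖^2) := (Real.sqrt_sq (norm_nonneg _)).symm
    _ ≤ Real.sqrt (‖v‖^2) := Real.sqrt_le_sqrt h1
    _ = ‖v‖ := Real.sqrt_sq (norm_nonneg v)

/-- **Distance comparison for the reflection map on epigraphs** (Lemma A.1): for
`n = d+1 ≥ 2`, a Lipschitz `f : ℝ^{n-1} → ℝ` with Lipschitz constant `M`, the epigraph
`D` supported by `f`, and `λ > 0`, with `Φ_λ⁻¹(x) = (x', f(x') + (1/λ)(f(x') − x_n))`,
there is `C > 0` depending only on `λ` and `M` such that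
`|x − y| ≤ C |Φ_λ⁻¹(x) − y|` for all `x, y ∈ D`. -/
theorem dist_comparison_reflection
    (d : ℕ) (hd : 1 ≤ d) (M : ℝ) (hM : 0 ≤ M)
    (f : EuclideanSpace ℝ (Fin d) → ℝ) (hf : LipschitzWith M.toNNReal f)
    (lam : ℝ) (hlam : 0 < lam) :
    ∃ C : ℝ, 0 < C ∧
      ∀ x ∈ epigraph f, ∀ y ∈ epigraph f,
        ‖x - y‖ ≤
          C * ‖mkPt (fst' x) (f (fst' x) + (1 / lam) * (f (fst' x) - lastc x)) - y‖ := by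
  refine ⟨(lam+1)*(M+1)+1, by positivity, ?_⟩
  intro x hx y hy
  set x' := fst' x with hx'
  set xn := lastc x with hxn
  set y' := fst' y with hy'
  set ym := lastc y with hym
  have hxD : f x' < xn := hx
  have hyD : f y' < ym := hy
  set t : ℝ := xn - f x' with ht
  have ht0 : 0 < t := sub_pos.2 hxD
  set z := mkPt x' (f x' + (1/lam) * (f x' - xn)) with hzdef
  have hz1 : fst' z = x' := fst'_mkPt _ _
  have hz2 : lastc z = f x' - t/lam := by
    rw [hzdef, lastc_mkPt]; field_simp; ring
  set r := ‖z - y‖ with hrdef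
  have hr0 : 0 ≤ r := norm_nonneg _
  have hr1 : ‖x' - y'‖ ≤ r := by
    have h : fst' (z - y) = x' - y' := by rw [fst'_sub, hz1]
    calc ‖x' - y'‖ = ‖fst' (z - y)‖ := by rw [h]
      _ ≤ r := norm_fst'_le _
  have hr2 : ym - lastc z ≤ r := by
    calc ym - lastc z ≤ |lastc z - ym| := by rw [abs_sub_comm]; exact le_abs_self _
      _ = |lastc (z - y)| := by rw [lastc_sub]
      _ ≤ r := abs_lastc_le _
  have hlip : f x' - f y' ≤ M * ‖x' - y'‖ := by
    have h := hf.dist_le_mul x' y'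
    rw [Real.coe_toNNReal M hM] at h
    calc f x' - f y' ≤ |f x' - f y'| := le_abs_self _
      _ = dist (f x') (f y') := (Real.dist_eq _ _).symm
      _ ≤ M * dist x' y' := h
      _ = M * ‖x' - y'‖ := by rw [dist_eq_norm]
  have hMr : M * ‖x' - y'‖ ≤ M * r := mul_le_mul_of_nonneg_left hr1 hM
  have hkey : t / lam ≤ (1 + M) * r := by
    have h1 : ym - (f x' - t/lam) ≤ r := by rw [← hz2]; exact hr2
    nlinarith
  have htle : t ≤ lam * (1 + M) * r := by
    have := mul_le_mul_of_nonneg_left hkey (le_of_lt hlam)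
    rw [mul_div_cancel₀ _ (ne_of_gt hlam)] at this
    linarith [this]
  have hxz : ‖x - z‖ = t + t/lam := by
    have h1 : fst' (x - z) = 0 := by rw [fst'_sub, hz1, sub_self]
    have h2 : lastc (x - z) = t + t/lam := by rw [lastc_sub, hz2]; ring
    have h3 := norm_sq_split (x - z)
    rw [h1, h2, norm_zero] at h3
    have hn : (0:ℝ) ≤ t + t/lam := by positivity
    calc ‖x - z‖ = Real.sqrt (‖x - z‖^2) := (Real.sqrt_sq (norm_nonneg _)).symm
      _ = Real.sqrt ((t + t/lam)^2) := by rw [h3]; ring_nf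
      _ = t + t/lam := Real.sqrt_sq hn
  have tri : ‖x - y‖ ≤ ‖x - z‖ + r := by
    have h : x - y = (x - z) + (z - y) := by abel
    rw [h]; exact norm_add_le _ _
  have hfin : ‖x - y‖ ≤ ((lam+1)*(M+1)+1) * r := by
    rw [hxz] at tri
    nlinarith
  exact hfin
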